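/- arXiv:2208.04175 — 3 statements merged into one kernel-verified Lean document; each statement's English description precedes it below -/
import Mathlib

section
/- For integers m ≥ n ≥ 0, the n+1 rectangular monomials 𝖾^k𝗇^m𝖾^{n−k} (0 ≤ k ≤ n) are linearly independent over ℂ(q) in the path algebra 𝒫, and their span equals 𝒫_{m,n}; that is, they form a basis of 𝒫_{m,n}. -/
noncomputable section

/-- The base field `F = ℂ(q)`. -/
abbrev F : Type := RatFunc ℂ

/-- The indeterminate `q`. -/
def qq : F := RatFunc.X

/-- The `q`-integer `[j]_q = 1 + q + ⋯ + q^(j-1)`. -/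
def qint (j : ℕ) : F := ∑ i ∈ Finset.range j, qq ^ i

/-- The `q`-factorial `[j]_q! = [1]_q ⋯ [j]_q`. -/
def qfact (j : ℕ) : F := ∏ i ∈ Finset.range j, qint (i + 1)

/-- Modular relations defining the path algebra `𝒫`; the letter `true` is `𝗇`,
the letter `false` is `𝖾`. -/
inductive PathRel : FreeAlgebra F Bool → FreeAlgebra F Bool → Prop where
  | mod1 : PathRel
      ((1 + qq) • (FreeAlgebra.ι F false * FreeAlgebra.ι F true * FreeAlgebra.ι F false))
      (qq • (FreeAlgebra.ι F false * FreeAlgebra.ι F false * FreeAlgebra.ι F true) +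
        FreeAlgebra.ι F true * FreeAlgebra.ι F false * FreeAlgebra.ι F false)
  | mod2 : PathRel
      ((1 + qq) • (FreeAlgebra.ι F true * FreeAlgebra.ι F false * FreeAlgebra.ι F true))
      (qq • (FreeAlgebra.ι F false * FreeAlgebra.ι F true * FreeAlgebra.ι F true) +
        FreeAlgebra.ι F true * FreeAlgebra.ι F true * FreeAlgebra.ι F false)

/-- The path algebra `𝒫`. -/
abbrev PathAlg : Type := RingQuot PathRel

/-- The generator `𝗇` of `𝒫`. -/
def Pn : PathAlg := RingQuot.mkAlgHom F PathRel (FreeAlgebra.ι F true)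

/-- The generator `𝖾` of `𝒫`. -/
def Pe : PathAlg := RingQuot.mkAlgHom F PathRel (FreeAlgebra.ι F false)

/-- The element of `𝒫` determined by a word in `𝗇` (`true`) and `𝖾` (`false`). -/
def wordElem (w : List Bool) : PathAlg := (w.map fun b => if b then Pn else Pe).prod

/-- `𝒫_{m,n}`: the span of words with `m` letters `𝗇` and `n` letters `𝖾`. -/
def Pmn (m n : ℕ) : Submodule F PathAlg :=
  Submodule.span F {x | ∃ w : List Bool, w.count true = m ∧ w.count false = n ∧ x = wordElem w}

/-- `lam` (0-indexed list of parts) is a partition contained in the `m × n` box. -/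
def IsPartitionIn (m n : ℕ) (lam : ℕ → ℕ) : Prop :=
  (∀ i j, i ≤ j → lam j ≤ lam i) ∧ (∀ i, lam i ≤ n) ∧ (∀ i, m ≤ i → lam i = 0)

/-- `eastBefore w r` = number of east steps (`false`) preceding the `(r+1)`-st
north step (`true`) of `w`. -/
def eastBefore : List Bool → ℕ → ℕ
  | [], _ => 0
  | true :: _, 0 => 0
  | true :: w, r + 1 => eastBefore w r
  | false :: w, r => eastBefore w r + 1

/-- `northBefore w r` = number of north steps (`true`) preceding the `(r+1)`-st
east step (`false`) of `w`. -/
def northBefore : List Bool → ℕ → ℕ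
  | [], _ => 0
  | false :: _, 0 => 0
  | false :: w, r + 1 => northBefore w r
  | true :: w, r => northBefore w r + 1

/-- The partition `λ(w)` of a word with `m` letters `𝗇`, as a 0-indexed function:
row `i` (from the top) of the partition has `eastBefore w (m-1-i)` cells. -/
def wordLam (m : ℕ) (w : List Bool) : ℕ → ℕ :=
  fun i => if i < m then eastBefore w (m - 1 - i) else 0

/-- The word `w(λ)` of a partition `λ ⊆ m × n` (given as 0-indexed `lam : ℕ → ℕ`). -/
def wordOf (m n : ℕ) (lam : ℕ → ℕ) : List Bool :=
  ((List.range m).flatMap fun k =>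
    List.replicate (lam (m - 1 - k) - lam (m - k)) false ++ [true]) ++
    List.replicate (n - lam 0) false

/-- The rook in column `j` of the placement `ρ` lies inside the Ferrers board of `lam`. -/
def rookInside (m n : ℕ) (lam : ℕ → ℕ) (ρ : Fin n ↪ Fin m) (j : Fin n) : Prop :=
  (j : ℕ) < lam (ρ j)

/-- The cell in row `i` (0-indexed from the top) and column `j` (0-indexed from the left)
is unattacked for the maximal non-attacking rook placement `ρ` (with the Ferrers board of
`lam` drawn in the top-left corner of the `m × n` board). -/
def Unattacked (m n : ℕ) (lam : ℕ → ℕ) (ρ : Fin n ↪ Fin m) (i : Fin m) (j : Fin n) : Prop :=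
  ρ j ≠ i ∧ ¬ ((ρ j : ℕ) < (i : ℕ)) ∧
    (if (j : ℕ) < lam i then
      (∀ j' : Fin n, ρ j' = i → ¬ (j' < j)) ∧
      (∀ j' : Fin n, ρ j' = i → j < j' → (j' : ℕ) < lam i)
    else
      ∀ j' : Fin n, ρ j' = i → j' < j → (j' : ℕ) < lam i)

/-- `stat ρ` = number of unattacked cells. -/
def statRook (m n : ℕ) (lam : ℕ → ℕ) (ρ : Fin n ↪ Fin m) : ℕ :=
  Set.ncard {p : Fin m × Fin n | Unattacked m n lam ρ p.1 p.2}

/-- The `q`-hit number `H_k^{m,n}(λ)`. -/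
def qHit (m n : ℕ) (lam : ℕ → ℕ) (k : ℕ) : F :=
  ∑ ρ : Fin n ↪ Fin m,
    if Set.ncard {j : Fin n | rookInside m n lam ρ j} = k then qq ^ statRook m n lam ρ else 0

/-- A Dyck word of size `N`. -/
def IsDyck (N : ℕ) (w : List Bool) : Prop :=
  w.count true = N ∧ w.count false = N ∧
    ∀ p : ℕ, (w.take p).count false ≤ (w.take p).count true

/-- Adjacency of the Dyck graph `G(D)` of a Dyck word of size `N` on vertices `Fin N`
(0-indexed: vertex `a` is the vertex `a+1` of `{1,…,N}`). -/
def dyckAdj (N : ℕ) (w : List Bool) (a b : Fin N) : Prop :=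
  ((a : ℕ) < b ∧ (b : ℕ) < northBefore w a) ∨ ((b : ℕ) < a ∧ (a : ℕ) < northBefore w b)

/-- Proper colorings of the Dyck graph `G(w)` with `ν` colors. -/
def properColorings (N ν : ℕ) (w : List Bool) : Set (Fin N → Fin ν) :=
  {κ | ∀ a b : Fin N, dyckAdj N w a b → κ a ≠ κ b}

/-- Number of ascents of a coloring. -/
def ascColor (N ν : ℕ) (w : List Bool) (κ : Fin N → Fin ν) : ℕ :=
  Set.ncard {p : Fin N × Fin N | (p.1 : ℕ) < p.2 ∧ dyckAdj N w p.1 p.2 ∧ κ p.1 < κ p.2}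

open scoped Classical in
/-- The chromatic quasisymmetric polynomial `X_{G(w)}(x_1,…,x_ν; q)`. -/
def chromX (N ν : ℕ) (w : List Bool) : MvPolynomial (Fin ν) F :=
  ∑ κ : Fin N → Fin ν,
    if κ ∈ properColorings N ν w then
      MvPolynomial.C (qq ^ ascColor N ν w κ) * ∏ a : Fin N, MvPolynomial.X (κ a)
    else 0

/-- The staircase word `δ_k = 𝖾^{n-k}(𝗇𝖾)^k𝗇^{m-k}`. -/
def deltaWord (m n k : ℕ) : List Bool :=
  List.replicate (n - k) false ++ (List.replicate k [true, false]).flatten ++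
    List.replicate (m - k) true

/-- `m_w`: the largest `k` with `λ(w) ⊆ λ(δ_k)`, i.e. such that the path of `δ_k`
lies weakly below the path of `w`. -/
def mw (m n : ℕ) (w : List Bool) : ℕ :=
  Finset.sup ((Finset.range (min m n + 1)).filter fun k =>
    ∀ i ∈ Finset.range m, wordLam m w i ≤ wordLam m (deltaWord m n k) i) id

/-- The lattice paths of `w` and `d` share the unit step of `w` corresponding to
the letter at (0-indexed) position `p` of `w`. -/
def StepShared (w d : List Bool) (p : ℕ) : Prop :=
  ∃ p' : ℕ, p' < d.length ∧ d[p']? = w[p]? ∧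
    (d.take p').count true = (w.take p).count true ∧
    (d.take p').count false = (w.take p).count false

/-- `w` possesses a critical factor: a factor `𝗇^i𝖾` or `𝗇𝖾^i` with `i ≥ 2`, whose run of
repeated letters is maximal within `w`, and whose letters contain a unit step shared by
the lattice paths of `w` and of `δ_{m_w}`. -/
def HasCriticalFactor (m n : ℕ) (w : List Bool) : Prop :=
  ∃ (x y : List Bool) (i : ℕ), 2 ≤ i ∧
    ((w = x ++ (List.replicate i true ++ [false]) ++ y ∧ x.getLast? ≠ some true ∧
        ∃ p, x.length ≤ p ∧ p < x.length + i + 1 ∧ StepShared w (deltaWord m n (mw m n w)) p) ∨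
      (w = x ++ ([true] ++ List.replicate i false) ++ y ∧ y.head? ≠ some false ∧
        ∃ p, x.length ≤ p ∧ p < x.length + i + 1 ∧ StepShared w (deltaWord m n (mw m n w)) p))

/-- Evaluation of a (commutative) polynomial in two variables at the commuting elements
`s`, `t` of `𝒫`. -/
def evalST (s t : PathAlg) (P : MvPolynomial (Fin 2) F) : PathAlg :=
  ∑ d ∈ P.support, P.coeff d • (s ^ (d 0) * t ^ (d 1))

/-- The conjugate partition: `conjP m lam i = λ'_i = #{rows r : λ_r ≥ i}` (here `i ≥ 1`,
rows 0-indexed, `lam` supported on `[0, m)`). -/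
def conjP (m : ℕ) (lam : ℕ → ℕ) (i : ℕ) : ℕ :=
  ((Finset.range m).filter fun r => i ≤ lam r).card

/-- The sequence `b(λ) = (b_1,…,b_n)` (1-indexed `i`) for `λ ⊆ m × n`, `m ≥ n`. -/
def bSeq (m : ℕ) (lam : ℕ → ℕ) (i : ℕ) : ℤ :=
  if lam (m - i) < i then (m : ℤ) + 1 - i - conjP m lam i else (i : ℤ) - lam (m - i)

/-- The element `wt_i ∈ 𝒫`. -/
def wt (i : ℤ) : PathAlg :=
  if 1 ≤ i then qint i.toNat • (Pn * Pe) - (qq * qint (i - 1).toNat) • (Pe * Pn)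
  else (qq ^ i) • (qint (1 - i).toNat • (Pe * Pn) - qint (-i).toNat • (Pn * Pe))

/-- The defining relations of the `q`-Klyachko algebra. -/
def klyRels : Set (MvPolynomial ℤ F) :=
  {x | ∃ i : ℤ, x = MvPolynomial.C (1 + qq) * (MvPolynomial.X i * MvPolynomial.X i) -
    (MvPolynomial.C qq * (MvPolynomial.X i * MvPolynomial.X (i - 1)) +
      MvPolynomial.X i * MvPolynomial.X (i + 1))}

/-- The `q`-Klyachko algebra `𝒦`. -/
abbrev Kly : Type := MvPolynomial ℤ F ⧸ Ideal.span klyRels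

/-- The generator `u_i` of `𝒦`. -/
def uK (i : ℤ) : Kly := Ideal.Quotient.mk (Ideal.span klyRels) (MvPolynomial.X i)

/-- The element `u(λ) = u_{a_1} ⋯ u_{a_m}` of `𝒦`, where `a(λ)` is the area sequence
of `λ ⊆ m × m` (here `a_{i+1} = (i+1) - λ_{m-i}` with `lam` 0-indexed). -/
def uLam (m : ℕ) (lam : ℕ → ℕ) : Kly :=
  ∏ i ∈ Finset.range m, uK ((i : ℤ) + 1 - lam (m - 1 - i))

/-- The partition `λ(G(D))` of a Dyck word of size `N`, 0-indexed:
`λ_{i+1} = N - h_{i+1}(D)`. -/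
def lamG (N : ℕ) (D : List Bool) : ℕ → ℕ :=
  fun i => if i < N then N - northBefore D i else 0

/-- The number of nonzero parts of `λ(G(D))`. -/
def ellG (N : ℕ) (D : List Bool) : ℕ :=
  ((Finset.range N).filter fun i => N - northBefore D i ≠ 0).card

/-- The Dyck graph `G(D)` is abelian. -/
def IsAbelian (N : ℕ) (D : List Bool) : Prop := lamG N D 0 + ellG N D ≤ N

/-- `r` is an acyclic orientation of the graph with adjacency `adj` on `Fin N`. -/
def IsAcyclicOrientation (N : ℕ) (adj : Fin N → Fin N → Prop)
    (r : Fin N → Fin N → Bool) : Prop :=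
  (∀ a b, r a b = true → adj a b) ∧
  (∀ a b, adj a b → (r a b = true ↔ ¬ r b a = true)) ∧
  (∀ a, ¬ Relation.TransGen (fun u v => r u v = true) a a)

/-- Number of ascents of an orientation. -/
def ascOrient (N : ℕ) (r : Fin N → Fin N → Bool) : ℕ :=
  Set.ncard {p : Fin N × Fin N | r p.1 p.2 = true ∧ (p.1 : ℕ) < p.2}

/-- Remove from `S` the sources of the orientation restricted to `S`. -/
def peel (N : ℕ) (r : Fin N → Fin N → Bool) (S : Set (Fin N)) : Set (Fin N) :=
  {v ∈ S | ∃ u ∈ S, r u v = true}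

/-- Number of sources of the orientation restricted to `S`. -/
def numSources (N : ℕ) (r : Fin N → Fin N → Bool) (S : Set (Fin N)) : ℕ :=
  Set.ncard {v ∈ S | ∀ u ∈ S, ¬ r u v = true}

open scoped Classical in
/-- `initial(A)`: the number of leading entries of the source sequence equal to `2`. -/
def initialA (N : ℕ) (r : Fin N → Fin N → Bool) : ℕ :=
  Finset.sup ((Finset.range (N + 1)).filter fun j =>
    ∀ k < j, numSources N r ((peel N r)^[k] Set.univ) = 2) id

end

set_option maxHeartbeats 1000000
set_option synthInstance.maxHeartbeats 400000

noncomputable section Aux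

lemma qq_ne_zero : qq ≠ 0 := RatFunc.X_ne_zero

lemma algF_inj : Function.Injective (algebraMap (Polynomial ℂ) F) := RatFunc.algebraMap_injective ℂ

lemma qq_eq : qq = algebraMap (Polynomial ℂ) F Polynomial.X := (RatFunc.algebraMap_X).symm

lemma one_add_qq_ne_zero : (1 + qq : F) ≠ 0 := by
  rw [qq_eq, ← map_one (algebraMap (Polynomial ℂ) F), ← map_add]
  intro h
  have := algF_inj (h.trans (map_zero _).symm)
  simpa using congrArg (Polynomial.eval 1) this

lemma qint_ne_zero (s : ℕ) (hs : 1 ≤ s) : qint s ≠ 0 := by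
  have heq : qint s = algebraMap (Polynomial ℂ) F (∑ i ∈ Finset.range s, Polynomial.X ^ i) := by
    simp [qint, qq_eq, map_sum]
  rw [heq]
  intro h
  have h2 := algF_inj (h.trans (map_zero _).symm)
  have h3 := congrArg (Polynomial.eval 0) h2
  rw [Polynomial.eval_finset_sum] at h3
  simp only [Polynomial.eval_pow, Polynomial.eval_X, Polynomial.eval_zero] at h3
  rw [Finset.sum_eq_single 0 (fun b _ hb => zero_pow hb) (fun h => absurd (Finset.mem_range.mpr hs) h)] at h3
  simp at h3

lemma qq_pow_ne_one (t : ℕ) (ht : 0 < t) : (qq : F) ^ t ≠ 1 := by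
  rw [qq_eq, ← map_pow, ← map_one (algebraMap (Polynomial ℂ) F)]
  intro h
  have h2 := algF_inj h
  have h3 := congrArg Polynomial.natDegree h2
  simp [Polynomial.natDegree_X_pow] at h3
  omega

lemma qq_zpow_eq_one_iff (j : ℤ) : (qq : F) ^ j = 1 ↔ j = 0 := by
  constructor
  · intro h
    by_contra hj
    rcases lt_trichotomy j 0 with hlt | heq | hgt
    · have h2 : (qq : F) ^ (-j) = 1 := by
        rw [zpow_neg, h, inv_one]
      rw [show (-j) = ((-j).toNat : ℤ) by omega, zpow_natCast] at h2
      exact qq_pow_ne_one _ (by omega) h2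
    · exact hj heq
    · rw [show j = (j.toNat : ℤ) by omega, zpow_natCast] at h
      exact qq_pow_ne_one _ (by omega) h
  · rintro rfl; simp

def cF (i : ℤ) : F := 1 - qq ^ (-i)

lemma cF_eq_zero_iff (i : ℤ) : cF i = 0 ↔ i = 0 := by
  unfold cF
  rw [sub_eq_zero, eq_comm, qq_zpow_eq_one_iff]
  omega

lemma cF_lin (j : ℤ) : (1 + qq) * cF (j+1) = qq * cF (j+2) + cF j := by
  have hq := qq_ne_zero
  have h1 : (qq:F) ^ (-(j+1)) = qq * qq ^ (-(j+2)) := by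
    rw [← zpow_one_add₀ hq]; ring_nf
  have h2 : (qq:F) ^ (-j) = qq^2 * qq ^ (-(j+2)) := by
    rw [← zpow_natCast qq 2, ← zpow_add₀ hq]; ring_nf
  unfold cF
  rw [h1, h2]
  ring

lemma qint_rec (t : ℕ) : qint (t+2) = (1 + qq) * qint (t+1) - qq * qint t := by
  have h1 : qint (t+1) = qint t + qq ^ t := Finset.sum_range_succ _ t
  have h2 : qint (t+2) = qint (t+1) + qq ^ (t+1) := Finset.sum_range_succ _ (t+1)
  rw [h2, h1]; ring


abbrev MM := ℤ →₀ F

def opN : MM →ₗ[F] MM := Finsupp.lmapDomain F F (fun i => i + 1)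
def opE : MM →ₗ[F] MM := Finsupp.lsum F fun i => cF i • Finsupp.lsingle (i - 1)

lemma opN_single (j : ℤ) (a : F) : opN (Finsupp.single j a) = Finsupp.single (j+1) a := by
  rw [opN, Finsupp.lmapDomain_apply, Finsupp.mapDomain_single]

lemma opE_single (j : ℤ) (a : F) : opE (Finsupp.single j a) = cF j • Finsupp.single (j-1) a := by
  rw [opE, Finsupp.lsum_single, LinearMap.smul_apply, Finsupp.lsingle_apply]

lemma cF_lin' (j : ℤ) : (1 + qq) * cF j = qq * cF (j+1) + cF (j-1) := by
  have h := cF_lin (j-1)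
  rw [show j-1+2 = j+1 by ring, show j-1+1 = j by ring] at h
  exact h

lemma endo2 : (1+qq) • (opN * opE * opN) = qq • (opE * opN * opN) + opN * opN * opE := by
  apply Finsupp.lhom_ext
  intro j a
  simp only [LinearMap.smul_apply, LinearMap.add_apply, Module.End.mul_apply,
    opN_single, opE_single, map_smul, smul_smul]
  rw [show j+1-1+1 = j+1 from by ring, show j+1+1-1 = j+1 from by ring,
    show j-1+1+1 = j+1 from by ring, ← add_smul]
  congr 1
  rw [show j+1+1 = j+2 from by ring]
  exact cF_lin j

lemma endo1 : (1+qq) • (opE * opN * opE) = qq • (opE * opE * opN) + opN * opE * opE := by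
  apply Finsupp.lhom_ext
  intro j a
  simp only [LinearMap.smul_apply, LinearMap.add_apply, Module.End.mul_apply,
    opN_single, opE_single, map_smul, smul_smul]
  rw [show j+1-1-1 = j-1 from by ring, show j-1-1+1 = j-1 from by ring,
    show j+1-1 = j from by ring, show j-1+1 = j from by ring, ← add_smul]
  congr 1
  calc (1 + qq) * (cF j * cF j) = cF j * ((1+qq) * cF j) := by ring
    _ = cF j * (qq * cF (j+1) + cF (j-1)) := by rw [cF_lin']
    _ = qq * (cF (j+1) * cF j) + cF j * cF (j-1) := by ring

def rep0 : FreeAlgebra F Bool →ₐ[F] Module.End F MM :=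
  FreeAlgebra.lift F (fun b => cond b opN opE)

lemma rep0_rel : ∀ ⦃x y : FreeAlgebra F Bool⦄, PathRel x y → rep0 x = rep0 y := by
  intro x y h
  cases h with
  | mod1 =>
    simp only [map_smul, map_add, map_mul, rep0, FreeAlgebra.lift_ι_apply, Bool.cond_true, Bool.cond_false]
    exact endo1
  | mod2 =>
    simp only [map_smul, map_add, map_mul, rep0, FreeAlgebra.lift_ι_apply, Bool.cond_true, Bool.cond_false]
    exact endo2

def rep : PathAlg →ₐ[F] Module.End F MM := RingQuot.liftAlgHom F ⟨rep0, rep0_rel⟩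

lemma rep_Pn : rep Pn = opN := by
  rw [rep, Pn, RingQuot.liftAlgHom_mkAlgHom_apply]
  exact FreeAlgebra.lift_ι_apply _ _

lemma rep_Pe : rep Pe = opE := by
  rw [rep, Pe, RingQuot.liftAlgHom_mkAlgHom_apply]
  exact FreeAlgebra.lift_ι_apply _ _

lemma powN (b : ℕ) (j : ℤ) (a : F) : (opN ^ b) (Finsupp.single j a) = Finsupp.single (j + b) a := by
  induction b generalizing j with
  | zero => simp
  | succ b ih =>
    rw [pow_succ, Module.End.mul_apply, opN_single, ih]
    congr 1
    push_cast
    ring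

lemma powE (k : ℕ) (j : ℤ) (a : F) :
    (opE ^ k) (Finsupp.single j a)
      = (∏ t ∈ Finset.range k, cF (j - t)) • Finsupp.single (j - k) a := by
  induction k generalizing j with
  | zero => simp
  | succ k ih =>
    rw [pow_succ, Module.End.mul_apply, opE_single, map_smul, ih, smul_smul,
      Finset.prod_range_succ']
    have h1 : j - 1 - (k:ℤ) = j - (k+1:ℕ) := by push_cast; ring
    rw [h1, mul_comm]
    congr 2
    · apply Finset.prod_congr rfl
      intro t _
      congr 1
      push_cast; ring
    · simp

theorem indep (m n : ℕ) (hmn : n ≤ m) :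
    LinearIndependent F
      (fun k : Fin (n + 1) => Pe ^ (k : ℕ) * Pn ^ m * Pe ^ (n - (k : ℕ))) := by
  rw [Fintype.linearIndependent_iff]
  intro g hg
  set sc : ℕ → ℤ → F := fun k j =>
    (∏ t ∈ Finset.range (n-k), cF (j - t)) *
      (∏ t ∈ Finset.range k, cF (j - ((n - k : ℕ):ℤ) + m - t)) with hsc
  have act : ∀ (k : Fin (n+1)) (j : ℤ),
      rep (Pe ^ (k:ℕ) * Pn ^ m * Pe ^ (n - (k:ℕ))) (Finsupp.single j 1)
        = sc (k:ℕ) j • Finsupp.single (j + m - n) 1 := by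
    intro k j
    have hk : (k:ℕ) ≤ n := Nat.lt_succ_iff.mp k.isLt
    have hc : ((n - (k:ℕ) : ℕ):ℤ) = (n:ℤ) - ((k:ℕ):ℤ) := by
      exact Nat.cast_sub hk
    rw [map_mul, map_mul, map_pow, map_pow, map_pow, rep_Pe, rep_Pn,
      Module.End.mul_apply, Module.End.mul_apply, powE, map_smul, powN, map_smul, powE,
      smul_smul, hsc]
    congr 1
    rw [hc]
    congr 1
    omega
  have key : ∀ j : ℤ, ∑ k : Fin (n+1), g k * sc (k:ℕ) j = 0 := by
    intro j
    have h0 := congrArg rep hg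
    rw [map_sum, map_zero] at h0
    have h1 := congrArg (fun f : Module.End F MM => f (Finsupp.single j 1)) h0
    simp only [LinearMap.sum_apply, map_smul, LinearMap.smul_apply, LinearMap.zero_apply] at h1
    simp only [act, smul_smul] at h1
    rw [← Finset.sum_smul] at h1
    rcases smul_eq_zero.mp h1 with h | h
    · exact h
    · exact absurd (Finsupp.single_eq_zero.mp h) one_ne_zero
  have step : ∀ k : Fin (n+1), (∀ k' : Fin (n+1), (k':ℕ) < (k:ℕ) → g k' = 0) → g k = 0 := by
    intro k ih
    by_cases hkn : (k:ℕ) = n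
    · have h := key 0
      rw [Finset.sum_eq_single k] at h
      · have hnz : sc (k:ℕ) 0 ≠ 0 := by
          rw [hsc]
          apply mul_ne_zero
          · rw [hkn, Nat.sub_self]
            simp
          · rw [Finset.prod_ne_zero_iff]
            intro t ht
            rw [Ne, cF_eq_zero_iff]
            have h1 := Finset.mem_range.mp ht
            have h2 : ((n - (k:ℕ) : ℕ):ℤ) = (n:ℤ) - ((k:ℕ):ℤ) := by
              exact Nat.cast_sub (le_of_eq hkn)
            rw [h2]
            omega
        exact (mul_eq_zero.mp h).resolve_right hnz
      · intro b _ hb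
        have hbn : (b:ℕ) < n := by
          have := Nat.lt_succ_iff.mp b.isLt
          rcases lt_or_eq_of_le this with h' | h'
          · exact h'
          · exact absurd (Fin.ext (h'.trans hkn.symm) : b = k) hb
        have : sc (b:ℕ) 0 = 0 := by
          rw [hsc]
          apply mul_eq_zero_of_left
          apply Finset.prod_eq_zero (Finset.mem_range.mpr (by omega : 0 < n - (b:ℕ)))
          rw [cF_eq_zero_iff]
          simp
        rw [this, mul_zero]
      · intro h; exact absurd (Finset.mem_univ k) h
    · have hkn' : (k:ℕ) < n := lt_of_le_of_ne (Nat.lt_succ_iff.mp k.isLt) hkn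
      have h := key ((n:ℤ) - m - (k:ℕ) - 1)
      rw [Finset.sum_eq_single k] at h
      · have hnz : sc (k:ℕ) ((n:ℤ) - m - (k:ℕ) - 1) ≠ 0 := by
          have h2 : ((n - (k:ℕ) : ℕ):ℤ) = (n:ℤ) - ((k:ℕ):ℤ) :=
            by exact Nat.cast_sub (le_of_lt hkn')
          rw [hsc]
          apply mul_ne_zero
          · rw [Finset.prod_ne_zero_iff]
            intro t ht
            have h1 := Finset.mem_range.mp ht
            rw [Ne, cF_eq_zero_iff]
            have hm : (n:ℤ) ≤ m := by exact_mod_cast hmn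
            omega
          · rw [Finset.prod_ne_zero_iff]
            intro t ht
            have h1 := Finset.mem_range.mp ht
            rw [Ne, cF_eq_zero_iff, h2]
            omega
        exact (mul_eq_zero.mp h).resolve_right hnz
      · intro b _ hb
        rcases lt_or_gt_of_ne (fun hc => hb (Fin.ext hc)) with hlt | hgt
        · rw [ih b hlt, zero_mul]
        · have : sc (b:ℕ) ((n:ℤ) - m - (k:ℕ) - 1) = 0 := by
            have hbn : (b:ℕ) ≤ n := Nat.lt_succ_iff.mp b.isLt
            have h2 : ((n - (b:ℕ) : ℕ):ℤ) = (n:ℤ) - ((b:ℕ):ℤ) :=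
              by exact Nat.cast_sub hbn
            rw [hsc]
            apply mul_eq_zero_of_right
            apply Finset.prod_eq_zero
              (Finset.mem_range.mpr (by omega : (b:ℕ) - (k:ℕ) - 1 < (b:ℕ)))
            rw [cF_eq_zero_iff, h2]
            have : (((b:ℕ) - (k:ℕ) - 1 : ℕ):ℤ) = ((b:ℕ):ℤ) - ((k:ℕ):ℤ) - 1 := by
              omega
            rw [this]
            ring
          rw [this, mul_zero]
      · intro h; exact absurd (Finset.mem_univ k) h
  have all : ∀ N : ℕ, ∀ k : Fin (n+1), (k:ℕ) ≤ N → g k = 0 := by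
    intro N
    induction N with
    | zero => intro k hk; exact step k (fun k' h => by omega)
    | succ N ihN =>
      intro k hk
      exact step k (fun k' h => ihN k' (by omega))
  exact fun k => all n k (Nat.lt_succ_iff.mp k.isLt)
open Submodule

-- relations in PathAlg
lemma base1 : (1+qq) • (Pe * Pn * Pe) = qq • (Pe * Pe * Pn) + Pn * Pe * Pe := by
  have h := RingQuot.mkAlgHom_rel F PathRel.mod1
  simpa only [map_smul, map_add, map_mul, Pe, Pn] using h

lemma base2 : (1+qq) • (Pn * Pe * Pn) = qq • (Pe * Pn * Pn) + Pn * Pn * Pe := by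
  have h := RingQuot.mkAlgHom_rel F PathRel.mod2
  simpa only [map_smul, map_add, map_mul, Pe, Pn] using h

lemma rel1' (u v : PathAlg) :
    (1+qq) • (u * (Pe * Pn * Pe) * v) = qq • (u * (Pe * Pe * Pn) * v) + u * (Pn * Pe * Pe) * v := by
  have h : u * ((1+qq) • (Pe * Pn * Pe)) * v = u * (qq • (Pe * Pe * Pn) + Pn * Pe * Pe) * v := by
    rw [base1]
  simpa only [mul_smul_comm, smul_mul_assoc, mul_add, add_mul] using h

lemma rel2' (u v : PathAlg) :
    (1+qq) • (u * (Pn * Pe * Pn) * v) = qq • (u * (Pe * Pn * Pn) * v) + u * (Pn * Pn * Pe) * v := by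
  have h : u * ((1+qq) • (Pn * Pe * Pn)) * v = u * (qq • (Pe * Pn * Pn) + Pn * Pn * Pe) * v := by
    rw [base2]
  simpa only [mul_smul_comm, smul_mul_assoc, mul_add, add_mul] using h

-- generic span transport
lemma mul_mem_span {u v x : PathAlg} {S T : Set PathAlg}
    (hx : x ∈ span F S) (h : ∀ y ∈ S, u * y * v ∈ span F T) : u * x * v ∈ span F T := by
  induction hx using Submodule.span_induction with
  | mem y hy => exact h y hy
  | zero => simpa using zero_mem _
  | add a b _ _ ha hb =>
    rw [mul_add, add_mul]
    exact add_mem ha hb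
  | smul c a _ ha =>
    rw [mul_smul_comm, smul_mul_assoc]
    exact smul_mem _ _ ha

def XX (a b : ℕ) : PathAlg := Pn^a * Pe * Pn^b

lemma xrel (a b : ℕ) :
    (1+qq) • XX (a+1) (b+1) = qq • XX a (b+2) + XX (a+2) b := by
  have h := rel2' (Pn^a) (Pn^b)
  have eqm : Pn^a * (Pn * Pe * Pn) * Pn^b = XX (a+1) (b+1) := by
    rw [XX, pow_succ, pow_succ']; simp only [mul_assoc]
  have eql : Pn^a * (Pe * Pn * Pn) * Pn^b = XX a (b+2) := by
    rw [XX, pow_succ', pow_succ']; simp only [mul_assoc]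
  have eqr : Pn^a * (Pn * Pn * Pe) * Pn^b = XX (a+2) b := by
    rw [XX, pow_succ, pow_succ]; simp only [mul_assoc]
  rw [eqm, eql, eqr] at h
  exact h

lemma qint_zero : qint 0 = 0 := by simp [qint]
lemma qint_one : qint 1 = 1 := by simp [qint]

lemma comb {M : Type} [AddCommGroup M] [Module F M] (p q c1 c0 d1 d0 : F) (Y0 Y1 : M) :
    p • (c1 • Y0 + d1 • Y1) - q • (c0 • Y0 + d0 • Y1)
      = (p*c1 - q*c0) • Y0 + (p*d1 - q*d0) • Y1 := by
  rw [smul_add, smul_add, smul_smul, smul_smul, smul_smul, smul_smul, sub_smul, sub_smul,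
    sub_add_sub_comm]

lemma coefX : ∀ a b : ℕ, ∃ c : F, XX a b = c • XX 0 (a+b) + qint a • XX 1 (a+b-1) := by
  intro a
  induction a using Nat.twoStepInduction with
  | zero => intro b; exact ⟨1, by simp [qint_zero]⟩
  | one => intro b; exact ⟨0, by simp [qint_one]⟩
  | more a ih ih1 =>
    intro b
    obtain ⟨c1, h1⟩ := ih1 (b+1)
    obtain ⟨c0, h0⟩ := ih (b+2)
    have hx : XX (a+2) b = (1+qq) • XX (a+1) (b+1) - qq • XX a (b+2) := by
      rw [eq_sub_iff_add_eq, add_comm, ← xrel a b]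
    refine ⟨(1+qq) * c1 - qq * c0, ?_⟩
    rw [hx, h1, h0, qint_rec]
    have e1 : a + 1 + (b + 1) = a + 2 + b := by omega
    have e2 : a + 1 + (b + 1) - 1 = a + 2 + b - 1 := by omega
    have e3 : a + (b + 2) = a + 2 + b := by omega
    have e4 : a + (b + 2) - 1 = a + 2 + b - 1 := by omega
    simp only [e1, e2, e3, e4]
    exact comb _ _ _ _ _ _ _ _

lemma A1 (b : ℕ) : Pn * Pe * Pn^b ∈ span F {Pe * Pn^(b+1), Pn^(b+1) * Pe} := by
  obtain ⟨c, hc⟩ := coefX (b+1) 0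
  simp only [XX, pow_zero, pow_one, mul_one, one_mul, Nat.add_zero, Nat.add_sub_cancel] at hc
  have hne := qint_ne_zero (b+1) (by omega)
  have h2 : qint (b+1) • (Pn * Pe * Pn^b) = Pn^(b+1) * Pe - c • (Pe * Pn^(b+1)) := by
    rw [eq_sub_iff_add_eq, add_comm]
    exact hc.symm
  have h3 : Pn * Pe * Pn^b
      = (qint (b+1))⁻¹ • (Pn^(b+1) * Pe) - ((qint (b+1))⁻¹ * c) • (Pe * Pn^(b+1)) := by
    have h4 := congrArg (fun z => (qint (b+1))⁻¹ • z) h2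
    rw [inv_smul_smul₀ hne] at h4
    rw [h4, smul_sub, smul_smul]
  rw [Submodule.mem_span_pair]
  exact ⟨-((qint (b+1))⁻¹ * c), (qint (b+1))⁻¹, by rw [h3, neg_smul]; abel⟩

def ZZ (m a b : ℕ) : PathAlg := Pe^a * Pn * Pe^b * Pn^m

lemma zrel (m a b : ℕ) :
    (1+qq) • ZZ m (a+1) (b+1) = qq • ZZ m (a+2) b + ZZ m a (b+2) := by
  have h := rel1' (Pe^a) (Pe^b * Pn^m)
  have eqm : Pe^a * (Pe * Pn * Pe) * (Pe^b * Pn^m) = ZZ m (a+1) (b+1) := by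
    rw [ZZ, pow_succ, pow_succ']; simp only [mul_assoc]
  have eql : Pe^a * (Pe * Pe * Pn) * (Pe^b * Pn^m) = ZZ m (a+2) b := by
    rw [ZZ, pow_succ, pow_succ]; simp only [mul_assoc]
  have eqr : Pe^a * (Pn * Pe * Pe) * (Pe^b * Pn^m) = ZZ m a (b+2) := by
    rw [ZZ, pow_succ', pow_succ']; simp only [mul_assoc]
  rw [eqm, eql, eqr] at h
  exact h

lemma zspan (m : ℕ) : ∀ b a : ℕ, ZZ m a b ∈ span F {ZZ m (a+b) 0, ZZ m (a+b-1) 1} := by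
  intro b
  induction b using Nat.twoStepInduction with
  | zero => intro a; exact subset_span (by simp)
  | one => intro a; exact subset_span (by simp)
  | more b ih ih1 =>
    intro a
    have hz : ZZ m a (b+2) = (1+qq) • ZZ m (a+1) (b+1) - qq • ZZ m (a+2) b := by
      rw [eq_sub_iff_add_eq, add_comm, ← zrel]
    rw [hz]
    apply sub_mem
    · apply smul_mem
      have h := ih1 (a+1)
      simpa [show a+1+(b+1) = a+(b+2) by omega, show a+1+(b+1)-1 = a+(b+2)-1 by omega] using h
    · apply smul_mem
      have h := ih (a+2)
      simpa [show a+2+b = a+(b+2) by omega, show a+2+b-1 = a+(b+2)-1 by omega] using h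

lemma claimC (m j : ℕ) :
    Pn * Pe^j * Pn^m ∈ span F {x | ∃ i, i ≤ j ∧ x = Pe^i * Pn^(m+1) * Pe^(j-i)} := by
  cases j with
  | zero =>
    apply subset_span
    refine ⟨0, le_refl 0, ?_⟩
    simp [pow_succ', mul_assoc]
  | succ j' =>
    set j := j' + 1
    have h0 : ZZ m 0 j = Pn * Pe^j * Pn^m := by
      rw [ZZ, pow_zero, one_mul]
    have h1 := zspan m j 0
    rw [h0, zero_add] at h1
    have hj1 : j - 1 = j' := rfl
    rw [hj1] at h1
    -- both generators are in the target span
    refine Submodule.span_le.mpr ?_ h1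
    rintro x (rfl | rfl)
    · -- ZZ m j 0 = Pe^j * Pn^(m+1) * Pe^0
      apply subset_span
      refine ⟨j, le_refl j, ?_⟩
      rw [ZZ]
      simp [pow_succ', mul_assoc, pow_zero]
    · -- ZZ m j' 1
      have h2 : ZZ m j' 1 = Pe^j' * (Pn * Pe * Pn^m) * 1 := by
        rw [ZZ]
        simp [pow_one, mul_assoc]
      rw [h2]
      apply mul_mem_span (A1 m)
      rintro y (rfl | rfl)
      · apply subset_span
        refine ⟨j, le_refl j, ?_⟩
        simp [pow_succ, mul_assoc]
        rw [← mul_assoc, ← pow_succ]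
      · apply subset_span
        refine ⟨j', by omega, ?_⟩
        simp [show j - j' = 1 from by omega, pow_one, mul_assoc]

def SpanSet (m n : ℕ) : Set PathAlg :=
  Set.range fun k : Fin (n + 1) => Pe ^ (k : ℕ) * Pn ^ m * Pe ^ (n - (k : ℕ))

lemma mem_SpanSet {m n i : ℕ} (h : i ≤ n) : Pe ^ i * Pn ^ m * Pe ^ (n - i) ∈ SpanSet m n :=
  ⟨⟨i, Nat.lt_succ_of_le h⟩, rfl⟩

lemma wordElem_cons_true (w : List Bool) : wordElem (true :: w) = Pn * wordElem w := by
  simp [wordElem]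

lemma wordElem_cons_false (w : List Bool) : wordElem (false :: w) = Pe * wordElem w := by
  simp [wordElem]

lemma wordSpan (w : List Bool) :
    wordElem w ∈ span F (SpanSet (w.count true) (w.count false)) := by
  induction w with
  | nil =>
    apply subset_span
    have : wordElem [] = Pe ^ 0 * Pn ^ 0 * Pe ^ (0 - 0) := by simp [wordElem]
    rw [this]
    exact mem_SpanSet (le_refl 0)
  | cons b w ih =>
    cases b with
    | false =>
      rw [wordElem_cons_false,
      show (false :: w).count false = w.count false + 1 from by simp,
      show (false :: w).count true = w.count true from by simp,
      ← mul_one (Pe * wordElem w)]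
      refine mul_mem_span ih ?_
      rintro y ⟨k, rfl⟩
      apply subset_span
      rw [mul_one]
      have hk : (k:ℕ) ≤ w.count false := Nat.lt_succ_iff.mp k.isLt
      have : Pe * (Pe ^ (k:ℕ) * Pn ^ (w.count true) * Pe ^ (w.count false - (k:ℕ)))
          = Pe ^ ((k:ℕ)+1) * Pn ^ (w.count true) * Pe ^ ((w.count false + 1) - ((k:ℕ)+1)) := by
        rw [show (w.count false + 1) - ((k:ℕ)+1) = w.count false - (k:ℕ) from by omega,
          pow_succ']
        simp [mul_assoc]
      rw [this]
      exact mem_SpanSet (by omega)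
    | true =>
      rw [wordElem_cons_true, ← mul_one (Pn * wordElem w)]
      refine mul_mem_span ih ?_
      rintro y ⟨k, rfl⟩
      have hk : (k:ℕ) ≤ w.count false := Nat.lt_succ_iff.mp k.isLt
      show Pn * (Pe ^ (k:ℕ) * Pn ^ (w.count true) * Pe ^ (w.count false - (k:ℕ))) * 1
        ∈ span F (SpanSet ((true :: w).count true) ((true :: w).count false))
      have hsplit : Pn * (Pe ^ (k:ℕ) * Pn ^ (w.count true) * Pe ^ (w.count false - (k:ℕ))) * 1
          = 1 * (Pn * Pe ^ (k:ℕ) * Pn ^ (w.count true)) * Pe ^ (w.count false - (k:ℕ)) := by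
        simp [mul_assoc]
      rw [hsplit]
      apply mul_mem_span (claimC (w.count true) (k:ℕ))
      rintro z ⟨i, hi, rfl⟩
      apply subset_span
      rw [one_mul]
      have hre : Pe ^ i * Pn ^ (w.count true + 1) * Pe ^ ((k:ℕ) - i) * Pe ^ (w.count false - (k:ℕ))
          = Pe ^ i * Pn ^ (w.count true + 1) * Pe ^ (w.count false - i) := by
        rw [mul_assoc, ← pow_add,
          show (k:ℕ) - i + (w.count false - (k:ℕ)) = w.count false - i from by omega]
      rw [hre,
        show (true :: w).count true = w.count true + 1 from by simp,
        show (true :: w).count false = w.count false from by simp]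
      exact mem_SpanSet (by omega)

lemma wordElem_append (u v : List Bool) : wordElem (u ++ v) = wordElem u * wordElem v := by
  simp [wordElem]

lemma wordElem_replicate (k : ℕ) (b : Bool) :
    wordElem (List.replicate k b) = (if b then Pn else Pe)^k := by
  simp [wordElem, List.map_replicate, List.prod_replicate]

lemma span_eq (m n : ℕ) : span F (SpanSet m n) = Pmn m n := by
  apply le_antisymm
  · rw [Submodule.span_le]
    rintro x ⟨k, rfl⟩
    apply subset_span
    have hk : (k:ℕ) ≤ n := Nat.lt_succ_iff.mp k.isLt
    refine ⟨List.replicate (k:ℕ) false ++ List.replicate m true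
      ++ List.replicate (n-(k:ℕ)) false, ?_, ?_, ?_⟩
    · simp [List.count_append, List.count_replicate]
    · simp [List.count_append, List.count_replicate]
      omega
    · rw [wordElem_append, wordElem_append, wordElem_replicate, wordElem_replicate,
        wordElem_replicate]
      simp
  · rw [Pmn, Submodule.span_le]
    rintro x ⟨w, hm, hn, rfl⟩
    have h := wordSpan w
    rw [hm, hn] at h
    exact h

end Aux

/-- The rectangular monomials form a basis of `𝒫_{m,n}`. -/
theorem stmt13 (m n : ℕ) (hmn : n ≤ m) :
    LinearIndependent F
      (fun k : Fin (n + 1) => Pe ^ (k : ℕ) * Pn ^ m * Pe ^ (n - (k : ℕ))) ∧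
    Submodule.span F
      (Set.range fun k : Fin (n + 1) => Pe ^ (k : ℕ) * Pn ^ m * Pe ^ (n - (k : ℕ))) =
      Pmn m n := by
  exact ⟨indep m n hmn, span_eq m n⟩
end

section
/- For every partition λ contained in the m×m box, the multiset of entries of the area sequence a(λ) equals the multiset of entries of the area sequence a(λ^t), where λ^t is the conjugate partition (also contained in the m×m box). -/
lemma conjP_le' (m : ℕ) (lam : ℕ → ℕ) (t : ℕ) : conjP m lam t ≤ m := by
  calc conjP m lam t ≤ (Finset.range m).card := Finset.card_filter_le _ _
  _ = m := Finset.card_range m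

lemma conjP_lt_iff (m : ℕ) (lam : ℕ → ℕ) (hlam : IsPartitionIn m m lam)
    (t i : ℕ) (ht : 1 ≤ t) : i < conjP m lam t ↔ t ≤ lam i := by
  obtain ⟨hmono, _, hzero⟩ := hlam
  constructor
  · intro h
    by_contra hcon
    push_neg at hcon
    have hsub : (Finset.range m).filter (fun r => t ≤ lam r) ⊆ Finset.range i := by
      intro r hr
      simp only [Finset.mem_filter, Finset.mem_range] at hr ⊢
      by_contra hri
      push_neg at hri
      have := le_trans hr.2 (hmono i r hri)
      omega
    have h2 := Finset.card_le_card hsub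
    rw [Finset.card_range] at h2
    unfold conjP at h
    omega
  · intro h
    have him : i < m := by
      by_contra hm
      push_neg at hm
      rw [hzero i hm] at h; omega
    have hsub : Finset.range (i + 1) ⊆ (Finset.range m).filter (fun r => t ≤ lam r) := by
      intro r hr
      simp only [Finset.mem_range] at hr
      simp only [Finset.mem_filter, Finset.mem_range]
      exact ⟨by omega, le_trans h (hmono r i (by omega))⟩
    have h2 := Finset.card_le_card hsub
    rw [Finset.card_range] at h2
    unfold conjP
    omega

lemma keyGe (m : ℕ) (lam : ℕ → ℕ) (hlam : IsPartitionIn m m lam) (c : ℤ) :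
    ((Finset.range m).filter (fun i : ℕ => c ≤ (i : ℤ) + lam i)).card =
    ((Finset.range m).filter (fun i : ℕ => c ≤ (i : ℤ) + conjP m lam (i + 1))).card := by
  rcases le_or_gt c 0 with hc | hc
  · rw [Finset.filter_true_of_mem (fun i _ => le_trans hc (by positivity)),
      Finset.filter_true_of_mem (fun i _ => le_trans hc (by positivity))]
  · set n := c.toNat with hndef
    have hcn : (n : ℤ) = c := Int.toNat_of_nonneg (le_of_lt hc)
    have h1 : 1 ≤ n := by omega
    apply Finset.card_nbij' (fun i => if n ≤ i then i else n - 1 - i)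
        (fun i => if n ≤ i then i else n - 1 - i)
    · intro i hi
      simp only [Finset.mem_coe, Finset.mem_filter, Finset.mem_range] at hi ⊢
      obtain ⟨him, hci⟩ := hi
      split_ifs with h
      · have h0 : (0 : ℤ) ≤ (conjP m lam (i + 1) : ℤ) := by positivity
        exact ⟨him, by omega⟩
      · push_neg at h
        have hli : n ≤ i + lam i := by omega
        have hlm : lam i ≤ m := hlam.2.1 i
        have hj1 : n - 1 - i + 1 = n - i := by omega
        rw [hj1]
        have hK : i < conjP m lam (n - i) :=
          (conjP_lt_iff m lam hlam (n - i) i (by omega)).mpr (by omega)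
        exact ⟨by omega, by omega⟩
    · intro i hi
      simp only [Finset.mem_coe, Finset.mem_filter, Finset.mem_range] at hi ⊢
      obtain ⟨him, hci⟩ := hi
      split_ifs with h
      · have h0 : (0 : ℤ) ≤ (lam i : ℤ) := by positivity
        exact ⟨him, by omega⟩
      · push_neg at h
        have hK : n ≤ i + conjP m lam (i + 1) := by omega
        have hKm : conjP m lam (i + 1) ≤ m := conjP_le' m lam (i + 1)
        have hL : lam (n - 1 - i) ≥ i + 1 := by
          have := (conjP_lt_iff m lam hlam (i + 1) (n - 1 - i) (by omega)).mp (by omega)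
          omega
        exact ⟨by omega, by omega⟩
    · intro i hi
      simp only [Finset.mem_coe, Finset.mem_filter, Finset.mem_range] at hi ⊢
      split_ifs <;> omega
    · intro i hi
      simp only [Finset.mem_coe, Finset.mem_filter, Finset.mem_range] at hi ⊢
      split_ifs <;> omega

lemma keyEq (m : ℕ) (lam : ℕ → ℕ) (hlam : IsPartitionIn m m lam) (c : ℤ) :
    ((Finset.range m).filter (fun i : ℕ => (i : ℤ) + lam i = c)).card =
    ((Finset.range m).filter (fun i : ℕ => (i : ℤ) + conjP m lam (i + 1) = c)).card := by
  have split : ∀ g : ℕ → ℤ, ((Finset.range m).filter (fun i : ℕ => c ≤ g i)).card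
      = ((Finset.range m).filter (fun i : ℕ => g i = c)).card
        + ((Finset.range m).filter (fun i : ℕ => c + 1 ≤ g i)).card := by
    intro g
    rw [← Finset.card_union_of_disjoint (by
      rw [Finset.disjoint_left]
      intro a ha hb
      simp only [Finset.mem_filter] at ha hb
      omega)]
    congr 1
    ext i
    simp only [Finset.mem_filter, Finset.mem_union]
    constructor
    · rintro ⟨hi, h⟩
      rcases eq_or_lt_of_le h with h' | h'
      · exact Or.inl ⟨hi, h'.symm⟩
      · exact Or.inr ⟨hi, by omega⟩
    · rintro (⟨hi, h⟩ | ⟨hi, h⟩) <;> exact ⟨hi, by omega⟩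
  have h1 := keyGe m lam hlam c
  have h2 := keyGe m lam hlam (c + 1)
  have s1 := split (fun i : ℕ => (i : ℤ) + lam i)
  have s2 := split (fun i : ℕ => (i : ℤ) + conjP m lam (i + 1))
  omega

lemma reindex (m : ℕ) (g : ℕ → ℕ) (b : ℤ) :
    ((Finset.range m).filter (fun i : ℕ => b = (i : ℤ) + 1 - g (m - 1 - i))).card =
    ((Finset.range m).filter (fun i : ℕ => (i : ℤ) + g i = (m : ℤ) - b)).card := by
  apply Finset.card_nbij' (fun i => m - 1 - i) (fun i => m - 1 - i)
  · intro i hi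
    simp only [Finset.mem_coe, Finset.mem_filter, Finset.mem_range] at hi ⊢
    obtain ⟨him, hcond⟩ := hi
    refine ⟨by omega, ?_⟩
    omega
  · intro i hi
    simp only [Finset.mem_coe, Finset.mem_filter, Finset.mem_range] at hi ⊢
    obtain ⟨him, hcond⟩ := hi
    refine ⟨by omega, ?_⟩
    rw [show m - 1 - (m - 1 - i) = i from by omega]
    omega
  · intro i hi
    simp only [Finset.mem_coe, Finset.mem_filter, Finset.mem_range] at hi ⊢
    omega
  · intro i hi
    simp only [Finset.mem_coe, Finset.mem_filter, Finset.mem_range] at hi ⊢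
    omega

/-- The multisets of entries of `a(λ)` and `a(λᵗ)` coincide. -/
theorem stmt15 (m : ℕ) (lam : ℕ → ℕ) (hlam : IsPartitionIn m m lam) :
    (Multiset.range m).map (fun i : ℕ => (i : ℤ) + 1 - (lam (m - 1 - i) : ℤ)) =
    (Multiset.range m).map (fun i : ℕ => (i : ℤ) + 1 - (conjP m lam (m - i) : ℤ)) := by
  refine Multiset.ext.mpr fun b => ?_
  rw [Multiset.count_map, Multiset.count_map]
  show ((Finset.range m).filter (fun i : ℕ => b = (i : ℤ) + 1 - (lam (m - 1 - i) : ℤ))).card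
     = ((Finset.range m).filter (fun i : ℕ => b = (i : ℤ) + 1 - (conjP m lam (m - i) : ℤ))).card
  have e2 : (Finset.range m).filter (fun i : ℕ => b = (i : ℤ) + 1 - (conjP m lam (m - i) : ℤ))
      = (Finset.range m).filter
          (fun i : ℕ => b = (i : ℤ) + 1 - (conjP m lam (m - 1 - i + 1) : ℤ)) := by
    apply Finset.filter_congr
    intro i hi
    simp only [Finset.mem_range] at hi
    rw [show m - 1 - i + 1 = m - i from by omega]
  have r2 := reindex m (fun j => conjP m lam (j + 1)) b
  rw [e2, reindex m lam b, r2]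
  exact keyEq m lam hlam ((m : ℤ) - b)
end

section
/- In the q-Klyachko algebra 𝒦, the images of the generators u_0 and u_1 are algebraically independent over ℂ(q); equivalently, the subalgebra of 𝒦 generated by u_0 and u_1 is a polynomial algebra in two variables. -/
noncomputable section Aux16
def vv (i : ℤ) : MvPolynomial (Fin 2) F :=
  MvPolynomial.C ((qq ^ i - qq)/(1 - qq)) * MvPolynomial.X 0 +
  MvPolynomial.C ((1 - qq ^ i)/(1 - qq)) * MvPolynomial.X 1

lemma qq_ne_one : (1 : F) - qq ≠ 0 := by
  intro h
  have hq : qq = 1 := by linear_combination -h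
  have : (Polynomial.X : Polynomial ℂ) = 1 := by
    apply RatFunc.algebraMap_injective ℂ
    simpa [RatFunc.algebraMap_X, qq] using hq
  simpa [Polynomial.coeff_one] using congrArg (Polynomial.coeff · 1) this

lemma hrec (i : ℤ) : MvPolynomial.C (1 + qq) * vv i =
    MvPolynomial.C qq * vv (i-1) + vv (i+1) := by
  have h1 : qq ^ (i-1) = qq ^ i * qq⁻¹ := by
    rw [zpow_sub₀ qq_ne_zero, zpow_one, div_eq_mul_inv]
  have h2 : qq ^ (i+1) = qq ^ i * qq := by rw [zpow_add₀ qq_ne_zero, zpow_one]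
  have hC : ∀ (a b : F), a = b → MvPolynomial.C (σ := Fin 2) a = MvPolynomial.C b :=
    fun a b h => by rw [h]
  have e1 : ((1:F) + qq) * ((qq ^ i - qq)/(1-qq)) =
      qq * ((qq ^ i * qq⁻¹ - qq)/(1-qq)) + (qq ^ i * qq - qq)/(1-qq) := by
    field_simp [qq_ne_zero, qq_ne_one]
    ring
  have e2 : ((1:F) + qq) * ((1 - qq ^ i)/(1-qq)) =
      qq * ((1 - qq ^ i * qq⁻¹)/(1-qq)) + (1 - qq ^ i * qq)/(1-qq) := by
    field_simp [qq_ne_zero, qq_ne_one]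
    ring
  calc MvPolynomial.C ((1:F) + qq) * vv i
      = MvPolynomial.C (((1:F)+qq) * ((qq ^ i - qq)/(1-qq))) * MvPolynomial.X 0 +
        MvPolynomial.C (((1:F)+qq) * ((1 - qq ^ i)/(1-qq))) * MvPolynomial.X 1 := by
        simp only [vv, map_mul]; ring
    _ = _ := by
        rw [hC _ _ e1, hC _ _ e2]
        simp only [vv, h1, h2, map_add, map_mul]
        ring



def phiRel : MvPolynomial ℤ F →ₐ[F] MvPolynomial (Fin 2) F := MvPolynomial.aeval vv

lemma phi_rels : ∀ x ∈ klyRels, phiRel x = 0 := by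
  rintro x ⟨i, rfl⟩
  simp only [phiRel, map_sub, map_add, map_mul, MvPolynomial.aeval_X, MvPolynomial.aeval_C,
    MvPolynomial.algebraMap_eq, map_add, map_one]
  have h := hrec i
  rw [map_add, map_one] at h
  linear_combination (vv i) * h

lemma span_rels : ∀ a ∈ Ideal.span klyRels, phiRel a = 0 := by
  have hsub : klyRels ⊆ ↑(RingHom.ker phiRel.toRingHom) := fun x hx =>
    (RingHom.mem_ker (f := phiRel.toRingHom)).2 (phi_rels x hx)
  intro a ha
  exact (RingHom.mem_ker (f := phiRel.toRingHom)).1 (Ideal.span_le.mpr hsub ha)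

def phiK : Kly →ₐ[F] MvPolynomial (Fin 2) F :=
  Ideal.Quotient.liftₐ (Ideal.span klyRels) phiRel span_rels

lemma phiK_u (i : ℤ) : phiK (uK i) = vv i := by
  show phiRel (MvPolynomial.X i) = vv i
  simp [phiRel]

lemma vv_zero : vv 0 = MvPolynomial.X 0 := by
  simp [vv, div_self qq_ne_one]
lemma vv_one : vv 1 = MvPolynomial.X 1 := by
  simp [vv, div_self qq_ne_one]

end Aux16

/-- `u_0` and `u_1` are algebraically independent in `𝒦`. -/
theorem stmt16 :
    AlgebraicIndependent F (fun i : Fin 2 => if i = 0 then uK 0 else uK 1) := by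
  apply AlgebraicIndependent.of_comp phiK
  have h : (phiK ∘ fun i : Fin 2 => if i = 0 then uK 0 else uK 1) = MvPolynomial.X := by
    funext i
    fin_cases i <;> simp [phiK_u, vv_zero, vv_one]
  rw [h]
  exact MvPolynomial.algebraicIndependent_X _ _
end
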